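/- Let k be a field and r a positive integer. For any matrices A, B ∈ GL_r(k) satisfying A⁴ = id and (AB)³ = A², there exists a unique group homomorphism ρ : SL₂(ℤ) → GL_r(k) such that ρ(𝔰) = A and ρ(𝔱) = B. -/

import Mathlib

open Matrix MatrixGroups ModularGroup

abbrev Irr : Type := {x : ℝ // Irrational x}

namespace SL2Pres

noncomputable def mval (g : SL(2,ℤ)) (x : ℝ) : ℝ :=
  ((g 0 0 : ℤ) * x + (g 0 1 : ℤ)) / ((g 1 0 : ℤ) * x + (g 1 1 : ℤ))

lemma det_entries (g : SL(2,ℤ)) : g 0 0 * g 1 1 - g 0 1 * g 1 0 = 1 := by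
  have := g.2
  rwa [Matrix.det_fin_two] at this

lemma det_entriesR (g : SL(2,ℤ)) :
    ((g 0 0 : ℤ) : ℝ) * ((g 1 1 : ℤ) : ℝ) - ((g 0 1 : ℤ) : ℝ) * ((g 1 0 : ℤ) : ℝ) = 1 := by
  exact_mod_cast congrArg (fun n : ℤ => (n : ℝ)) (det_entries g)

lemma denom_ne (g : SL(2,ℤ)) {x : ℝ} (hx : Irrational x) :
    ((g 1 0 : ℤ) : ℝ) * x + ((g 1 1 : ℤ) : ℝ) ≠ 0 := by
  intro h
  rcases eq_or_ne (g 1 0) 0 with hc | hc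
  · have hd : g 1 1 ≠ 0 := by
      intro hd
      have := det_entries g
      rw [hc, hd] at this; simp at this
    rw [hc] at h
    norm_num at h
    exact hd (by exact_mod_cast h)
  · have hcR : ((g 1 0 : ℤ) : ℝ) ≠ 0 := Int.cast_ne_zero.2 hc
    apply hx
    refine ⟨(-(g 1 1 : ℚ)) / ((g 1 0 : ℤ) : ℚ), ?_⟩
    push_cast
    rw [div_eq_iff hcR]
    linarith

lemma mval_irrational (g : SL(2,ℤ)) {x : ℝ} (hx : Irrational x) :
    Irrational (mval g x) := by
  rintro ⟨q, hq⟩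
  have hden := denom_ne g hx
  have hnum : ((g 0 0 : ℤ) : ℝ) * x + ((g 0 1 : ℤ) : ℝ)
      = (q : ℝ) * (((g 1 0 : ℤ) : ℝ) * x + ((g 1 1 : ℤ) : ℝ)) :=
    (div_eq_iff hden).1 hq.symm
  by_cases h : ((g 0 0 : ℤ) : ℝ) - (q : ℝ) * ((g 1 0 : ℤ) : ℝ) = 0
  · have h2 : ((g 0 1 : ℤ) : ℝ) - (q : ℝ) * ((g 1 1 : ℤ) : ℝ) = 0 := by
      linear_combination hnum - x * h
    have hdet := det_entriesR g
    have c0 : (0:ℝ) = 1 := by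
      linear_combination hdet - ((g 1 1 : ℤ) : ℝ) * h + ((g 1 0 : ℤ) : ℝ) * h2
    norm_num at c0
  · apply hx
    refine ⟨((g 0 1 : ℚ) - q * (g 1 1 : ℚ)) / (q * (g 1 0 : ℚ) - (g 0 0 : ℚ)), ?_⟩
    have h' : (q : ℝ) * ((g 1 0 : ℤ) : ℝ) - ((g 0 0 : ℤ) : ℝ) ≠ 0 := by
      intro h0; apply h; linarith
    push_cast
    rw [div_eq_iff h']
    linarith [hnum]

lemma mval_mul (g h : SL(2,ℤ)) {x : ℝ} (hx : Irrational x) :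
    mval (g * h) x = mval g (mval h x) := by
  have e : ∀ i j : Fin 2, (((g * h) i j : ℤ) : ℝ)
      = (g i 0 : ℤ) * ((h 0 j : ℤ) : ℝ) + (g i 1 : ℤ) * ((h 1 j : ℤ) : ℝ) := by
    intro i j
    have : (g * h) i j = g i 0 * h 0 j + g i 1 * h 1 j := by
      show ((g * h : SL(2,ℤ)) : Matrix (Fin 2) (Fin 2) ℤ) i j = _
      rw [Matrix.SpecialLinearGroup.coe_mul, Matrix.mul_apply, Fin.sum_univ_two]
    exact_mod_cast congrArg (fun n : ℤ => (n : ℝ)) this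
  have hdh := denom_ne h hx
  have hdg := denom_ne g (mval_irrational h hx)
  have hdgh := denom_ne (g * h) hx
  rw [mval, mval, mval, e 0 0, e 0 1, e 1 0, e 1 1]
  rw [mval] at hdg
  field_simp
  ring

noncomputable instance : MulAction SL(2,ℤ) Irr where
  smul g x := ⟨mval g x.1, mval_irrational g x.2⟩
  one_smul x := by
    ext
    show mval 1 x.1 = x.1
    have e : ∀ i j : Fin 2, ((1 : SL(2,ℤ)) i j) = (1 : Matrix (Fin 2) (Fin 2) ℤ) i j := by
      intro i j; rfl
    rw [mval, e 0 0, e 0 1, e 1 0, e 1 1]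
    norm_num [Matrix.one_apply]
  mul_smul g h x := by
    ext
    exact mval_mul g h x.2

lemma smul_val (g : SL(2,ℤ)) (x : Irr) : (g • x).1 = mval g x.1 := rfl

noncomputable def act : SL(2,ℤ) →* Equiv.Perm Irr := MulAction.toPermHom SL(2,ℤ) Irr


lemma coe_ST : ((S * T : SL(2,ℤ)) : Matrix (Fin 2) (Fin 2) ℤ) = !![0,-1;1,1] := by
  rw [Matrix.SpecialLinearGroup.coe_mul, coe_S, coe_T]
  norm_num [Matrix.mul_fin_two]

lemma coe_ST_sq : (((S * T) ^ 2 : SL(2,ℤ)) : Matrix (Fin 2) (Fin 2) ℤ) = !![-1,-1;1,0] := by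
  rw [pow_two, Matrix.SpecialLinearGroup.coe_mul, coe_ST]
  norm_num [Matrix.mul_fin_two]

lemma coe_S_sq : ((S ^ 2 : SL(2,ℤ)) : Matrix (Fin 2) (Fin 2) ℤ) = -1 := by
  rw [pow_two, Matrix.SpecialLinearGroup.coe_mul, S_mul_S_eq]

lemma coe_ST_cube : (((S * T) ^ 3 : SL(2,ℤ)) : Matrix (Fin 2) (Fin 2) ℤ) = -1 := by
  rw [pow_succ, Matrix.SpecialLinearGroup.coe_mul, coe_ST_sq, coe_ST]
  norm_num [Matrix.mul_fin_two]
  exact (Matrix.eta_fin_two (-1 : Matrix (Fin 2) (Fin 2) ℤ)).symm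

lemma mval_S (x : ℝ) : mval S x = -1 / x := by
  rw [mval]
  have h00 : S 0 0 = 0 := rfl
  have h01 : S 0 1 = -1 := rfl
  have h10 : S 1 0 = 1 := rfl
  have h11 : S 1 1 = 0 := rfl
  rw [h00, h01, h10, h11]
  push_cast
  ring_nf

lemma mval_ST (x : ℝ) : mval (S * T) x = -1 / (x + 1) := by
  rw [mval]
  have h00 : (S * T) 0 0 = 0 := by rw [show ((S*T) 0 0) = ((S*T : SL(2,ℤ)) : Matrix (Fin 2) (Fin 2) ℤ) 0 0 from rfl, coe_ST]; rfl
  have h01 : (S * T) 0 1 = -1 := by rw [show ((S*T) 0 1) = ((S*T : SL(2,ℤ)) : Matrix (Fin 2) (Fin 2) ℤ) 0 1 from rfl, coe_ST]; rfl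
  have h10 : (S * T) 1 0 = 1 := by rw [show ((S*T) 1 0) = ((S*T : SL(2,ℤ)) : Matrix (Fin 2) (Fin 2) ℤ) 1 0 from rfl, coe_ST]; rfl
  have h11 : (S * T) 1 1 = 1 := by rw [show ((S*T) 1 1) = ((S*T : SL(2,ℤ)) : Matrix (Fin 2) (Fin 2) ℤ) 1 1 from rfl, coe_ST]; rfl
  rw [h00, h01, h10, h11]
  push_cast
  ring_nf

lemma mval_ST_sq (x : ℝ) : mval ((S * T) ^ 2) x = (-x - 1) / x := by
  rw [mval]
  have h00 : ((S*T)^2 : SL(2,ℤ)) 0 0 = -1 := by rw [show (((S*T)^2 : SL(2,ℤ)) 0 0) = (((S*T)^2 : SL(2,ℤ)) : Matrix (Fin 2) (Fin 2) ℤ) 0 0 from rfl, coe_ST_sq]; rfl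
  have h01 : ((S*T)^2 : SL(2,ℤ)) 0 1 = -1 := by rw [show (((S*T)^2 : SL(2,ℤ)) 0 1) = (((S*T)^2 : SL(2,ℤ)) : Matrix (Fin 2) (Fin 2) ℤ) 0 1 from rfl, coe_ST_sq]; rfl
  have h10 : ((S*T)^2 : SL(2,ℤ)) 1 0 = 1 := by rw [show (((S*T)^2 : SL(2,ℤ)) 1 0) = (((S*T)^2 : SL(2,ℤ)) : Matrix (Fin 2) (Fin 2) ℤ) 1 0 from rfl, coe_ST_sq]; rfl
  have h11 : ((S*T)^2 : SL(2,ℤ)) 1 1 = 0 := by rw [show (((S*T)^2 : SL(2,ℤ)) 1 1) = (((S*T)^2 : SL(2,ℤ)) : Matrix (Fin 2) (Fin 2) ℤ) 1 1 from rfl, coe_ST_sq]; rfl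
  rw [h00, h01, h10, h11]
  push_cast
  ring_nf

lemma act_neg_one_smul (g : SL(2,ℤ)) (hg : (g : Matrix (Fin 2) (Fin 2) ℤ) = -1) (x : Irr) :
    g • x = x := by
  ext
  rw [smul_val, mval]
  have h00 : g 0 0 = -1 := by rw [show (g 0 0) = (g : Matrix (Fin 2) (Fin 2) ℤ) 0 0 from rfl, hg]; rfl
  have h01 : g 0 1 = 0 := by rw [show (g 0 1) = (g : Matrix (Fin 2) (Fin 2) ℤ) 0 1 from rfl, hg]; rfl
  have h10 : g 1 0 = 0 := by rw [show (g 1 0) = (g : Matrix (Fin 2) (Fin 2) ℤ) 1 0 from rfl, hg]; rfl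
  have h11 : g 1 1 = -1 := by rw [show (g 1 1) = (g : Matrix (Fin 2) (Fin 2) ℤ) 1 1 from rfl, hg]; rfl
  rw [h00, h01, h10, h11]
  push_cast
  field_simp
  ring

/-- Hom from `Multiplicative (ZMod n)` sending the generator to `g`, given `g ^ n = 1`. -/
def cyc {G : Type*} [Group G] (n : ℕ) [NeZero n] (g : G) (hg : g ^ n = 1) :
    Multiplicative (ZMod n) →* G where
  toFun x := g ^ (Multiplicative.toAdd x).val
  map_one' := by
    show g ^ (ZMod.val (0 : ZMod n)) = 1
    rw [ZMod.val_zero, pow_zero]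
  map_mul' x y := by
    have key : ∀ m : ℕ, g ^ m = g ^ (m % n) := by
      intro m
      conv_lhs => rw [← Nat.mod_add_div m n]
      rw [pow_add, pow_mul, hg, one_pow, mul_one]
    show g ^ (ZMod.val (Multiplicative.toAdd x + Multiplicative.toAdd y)) = _
    rw [ZMod.val_add, ← key, pow_add]

abbrev Hfam : Bool → Type := fun b => Multiplicative (ZMod (bif b then 2 else 3))

lemma act_S_sq : act S ^ 2 = 1 := by
  rw [← map_pow]
  ext x
  show (((S ^ 2 : SL(2,ℤ)) • x : Irr)).1 = x.1
  rw [act_neg_one_smul _ coe_S_sq x]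

lemma act_ST_cube : act (S * T) ^ 3 = 1 := by
  rw [← map_pow]
  ext x
  show ((((S * T) ^ 3 : SL(2,ℤ)) • x : Irr)).1 = x.1
  rw [act_neg_one_smul _ coe_ST_cube x]

noncomputable def pingF : ∀ b : Bool, Hfam b →* Equiv.Perm Irr := fun b =>
  match b with
  | true => cyc 2 (act S) act_S_sq
  | false => cyc 3 (act (S * T)) act_ST_cube

def Xpp : Bool → Set Irr := fun b => bif b then {x | 0 < x.1} else {x | x.1 < 0}

lemma injective_pingpong : Function.Injective (Monoid.CoprodI.lift pingF) := by
  apply Monoid.CoprodI.lift_injective_of_ping_pong pingF _ Xpp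
  · -- nonempty
    intro i
    cases i
    · refine ⟨⟨-Real.sqrt 2, irrational_sqrt_two.neg⟩, ?_⟩
      show -Real.sqrt 2 < 0
      have := Real.sqrt_pos.2 (by norm_num : (0:ℝ) < 2)
      linarith
    · refine ⟨⟨Real.sqrt 2, irrational_sqrt_two⟩, ?_⟩
      show (0:ℝ) < Real.sqrt 2
      exact Real.sqrt_pos.2 (by norm_num)
  · -- disjoint
    intro i j hij
    have : ∀ x : Irr, x ∈ Xpp true → x ∈ Xpp false → False := by
      intro x h1 h2
      simp [Xpp] at h1 h2
      exact absurd h1 (not_lt.2 h2.le)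
    cases i <;> cases j <;> simp at hij <;>
      [ (exact Set.disjoint_left.2 fun x hx hy => this x hy hx);
        (exact Set.disjoint_left.2 fun x hx hy => this x hx hy)]
  · -- ping pong
    intro i j hij
    cases i <;> cases j <;> simp at hij
    · -- i = false (C3), j = true
      intro h hne
      have hcase : Multiplicative.toAdd h = 1 ∨ Multiplicative.toAdd h = 2 := by
        have : ∀ z : ZMod 3, z ≠ 0 → z = 1 ∨ z = 2 := by decide
        apply this
        intro h0
        exact hne (by
          have : h = Multiplicative.ofAdd 0 := by
            rw [← h0]; rfl
          rw [this]; rfl)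
      intro y hy
      rw [Set.mem_smul_set] at hy
      obtain ⟨x, hx, rfl⟩ := hy
      have hxpos : 0 < x.1 := hx
      rcases hcase with h1 | h1
      · have hval : (Multiplicative.toAdd h).val = 1 := by rw [h1]; rfl
        show ((pingF false h) • x).1 < 0
        show ((act (S*T)) ^ (Multiplicative.toAdd h).val • x).1 < 0
        rw [hval, pow_one]
        show ((S*T) • x).1 < 0
        rw [smul_val, mval_ST]
        apply div_neg_of_neg_of_pos <;> linarith
      · have hval : (Multiplicative.toAdd h).val = 2 := by rw [h1]; rfl
        show ((pingF false h) • x).1 < 0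
        show ((act (S*T)) ^ (Multiplicative.toAdd h).val • x).1 < 0
        rw [hval, ← map_pow]
        show (((S*T)^2 : SL(2,ℤ)) • x).1 < 0
        rw [smul_val, mval_ST_sq]
        apply div_neg_of_neg_of_pos <;> linarith
    · -- i = true (C2), j = false
      intro h hne
      have hval : (Multiplicative.toAdd h).val = 1 := by
        have : ∀ z : ZMod 2, z ≠ 0 → z = 1 := by decide
        have h1 : Multiplicative.toAdd h = 1 := by
          apply this
          intro h0
          exact hne (by
            have : h = Multiplicative.ofAdd 0 := by rw [← h0]; rfl
            rw [this]; rfl)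
        rw [h1]; rfl
      intro y hy
      rw [Set.mem_smul_set] at hy
      obtain ⟨x, hx, rfl⟩ := hy
      have hxneg : x.1 < 0 := hx
      show (0:ℝ) < ((pingF true h) • x).1
      show (0:ℝ) < ((act S) ^ (Multiplicative.toAdd h).val • x).1
      rw [hval, pow_one]
      show (0:ℝ) < (S • x).1
      rw [smul_val, mval_S]
      exact div_pos_of_neg_of_neg (by norm_num) hxneg
  · -- card
    right
    refine ⟨false, ?_⟩
    have : Cardinal.mk (Hfam false) = 3 := by
      show Cardinal.mk (Multiplicative (ZMod 3)) = 3
      rw [Cardinal.mk_congr (Multiplicative.toAdd (α := ZMod 3)), Cardinal.mk_fintype]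
      simp
    rw [this]

lemma S_pow_four : (S : SL(2,ℤ)) ^ 4 = 1 := by
  have : (S : SL(2,ℤ)) ^ 4 = S ^ 2 * S ^ 2 := by rw [← pow_add]
  apply Subtype.ext
  rw [this, Matrix.SpecialLinearGroup.coe_mul, coe_S_sq]
  norm_num

lemma ST_cube_eq_S_sq : ((S * T : SL(2,ℤ))) ^ 3 = S ^ 2 := by
  apply Subtype.ext
  rw [coe_ST_cube, coe_S_sq]

lemma S_sq_ne_one : (S : SL(2,ℤ)) ^ 2 ≠ 1 := by
  intro h
  have h2 := congrArg (fun g : SL(2,ℤ) => (g : Matrix (Fin 2) (Fin 2) ℤ)) h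
  beta_reduce at h2
  rw [coe_S_sq] at h2
  have := congrArg (fun m : Matrix (Fin 2) (Fin 2) ℤ => m 0 0) h2
  simp [Matrix.one_apply] at this

def rels : Set (FreeGroup Bool) :=
  {FreeGroup.of true ^ 4, (FreeGroup.of true * FreeGroup.of false) ^ 3 * (FreeGroup.of true ^ 2)⁻¹}

abbrev P := PresentedGroup rels

def sg : P := PresentedGroup.of true
def tg : P := PresentedGroup.of false

lemma rels_hold {G : Type*} [Group G] {a b : G} (ha : a ^ 4 = 1) (hab : (a * b) ^ 3 = a ^ 2) :
    ∀ r ∈ rels, FreeGroup.lift (fun x => bif x then a else b) r = 1 := by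
  intro r hr
  rcases hr with rfl | hr
  · simp only [map_pow, FreeGroup.lift_apply_of]
    exact ha
  · rw [Set.mem_singleton_iff] at hr
    subst hr
    simp only [_root_.map_mul, map_pow, map_inv, FreeGroup.lift_apply_of]
    show ((a * b) ^ 3) * (a ^ 2)⁻¹ = 1
    rw [hab, mul_inv_cancel]

lemma sg_pow_four : sg ^ 4 = 1 := by
  have : (sg : P) ^ 4 = PresentedGroup.mk rels (FreeGroup.of true ^ 4) := by
    rw [map_pow]; rfl
  rw [this]
  exact (QuotientGroup.eq_one_iff _).2
    (Subgroup.subset_normalClosure (Set.mem_insert _ _))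

lemma sgtg_cube : (sg * tg) ^ 3 = sg ^ 2 := by
  have h1 : PresentedGroup.mk rels ((FreeGroup.of true * FreeGroup.of false) ^ 3
      * (FreeGroup.of true ^ 2)⁻¹) = 1 :=
    (QuotientGroup.eq_one_iff _).2
      (Subgroup.subset_normalClosure (Set.mem_insert_of_mem _ rfl))
  have h2 : PresentedGroup.mk rels ((FreeGroup.of true * FreeGroup.of false) ^ 3
      * (FreeGroup.of true ^ 2)⁻¹) = (sg * tg) ^ 3 * (sg ^ 2)⁻¹ := by
    simp only [_root_.map_mul, map_pow, map_inv]
    rfl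
  rw [h2] at h1
  exact mul_inv_eq_one.1 h1

def zg : P := sg ^ 2

lemma zg_comm : ∀ p : P, Commute zg p := by
  have hzs : Commute zg sg := (Commute.refl sg).pow_left 2
  have hzst : Commute zg (sg * tg) := by
    rw [zg, ← sgtg_cube]
    exact (Commute.refl (sg * tg)).pow_left 3
  have hzt : Commute zg tg := by
    have : tg = sg⁻¹ * (sg * tg) := by group
    rw [this]
    exact Commute.mul_right hzs.inv_right hzst
  intro p
  have : p ∈ Subgroup.centralizer {zg} := by
    apply PresentedGroup.generated_by
    intro j
    rw [Subgroup.mem_centralizer_iff]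
    rintro h (rfl : h = zg)
    cases j
    · exact hzt.eq
    · exact hzs.eq
  rw [Subgroup.mem_centralizer_iff] at this
  exact (this zg rfl)

lemma comp_cyc {G H : Type*} [Group G] [Group H] (χ : G →* H) (n : ℕ) [NeZero n]
    (g : G) (hg : g ^ n = 1) (hg' : (χ g) ^ n = 1) :
    χ.comp (cyc n g hg) = cyc n (χ g) hg' := by
  apply MonoidHom.ext
  intro x
  show χ (g ^ (Multiplicative.toAdd x).val) = (χ g) ^ (Multiplicative.toAdd x).val
  rw [map_pow]

def piP : P →* SL(2,ℤ) :=
  PresentedGroup.toGroup (f := fun x => bif x then S else T)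
    (rels_hold S_pow_four ST_cube_eq_S_sq)

@[simp] lemma piP_sg : piP sg = S := PresentedGroup.toGroup.of _
@[simp] lemma piP_tg : piP tg = T := PresentedGroup.toGroup.of _

noncomputable def thP : P →* Equiv.Perm Irr := act.comp piP

lemma theta_zg : thP zg = 1 := by
  show act (piP (sg ^ 2)) = 1
  rw [map_pow, piP_sg, map_pow]
  exact act_S_sq

def Zsub : Subgroup P := Subgroup.zpowers zg

instance Zsub_normal : (Zsub).Normal := by
  constructor
  intro x hx g
  rw [Zsub, Subgroup.mem_zpowers_iff] at hx ⊢
  obtain ⟨n, rfl⟩ := hx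
  refine ⟨n, ?_⟩
  have : Commute (zg ^ n) g := (zg_comm g).zpow_left n
  rw [← this.eq, mul_assoc, mul_inv_cancel, mul_one]

abbrev Q := P ⧸ Zsub

def mkQ : P →* Q := QuotientGroup.mk' Zsub

noncomputable def psiQ : Q →* Equiv.Perm Irr :=
  QuotientGroup.lift Zsub thP (by
    intro x hx
    rw [Zsub, Subgroup.mem_zpowers_iff] at hx
    obtain ⟨n, rfl⟩ := hx
    show thP (zg ^ n) = 1
    rw [map_zpow, theta_zg, _root_.one_zpow])

lemma psiQ_mkQ (p : P) : psiQ (mkQ p) = thP p := rfl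

lemma mkQ_sg_sq : (mkQ sg) ^ 2 = 1 := by
  rw [← map_pow]
  exact (QuotientGroup.eq_one_iff _).2 (Subgroup.mem_zpowers zg)

lemma mkQ_sgtg_cube : (mkQ (sg * tg)) ^ 3 = 1 := by
  rw [← map_pow, sgtg_cube]
  exact (QuotientGroup.eq_one_iff _).2 (Subgroup.mem_zpowers zg)

noncomputable def Ffam : ∀ b : Bool, Hfam b →* Q := fun b =>
  match b with
  | true => cyc 2 (mkQ sg) mkQ_sg_sq
  | false => cyc 3 (mkQ (sg * tg)) mkQ_sgtg_cube

noncomputable def phiQ : Monoid.CoprodI Hfam →* Q := Monoid.CoprodI.lift Ffam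

lemma psiQ_comp_phiQ : psiQ.comp phiQ = Monoid.CoprodI.lift pingF := by
  apply Monoid.CoprodI.ext_hom
  intro i
  apply MonoidHom.ext
  intro x
  show psiQ (phiQ (Monoid.CoprodI.of x)) = Monoid.CoprodI.lift pingF (Monoid.CoprodI.of x)
  rw [show phiQ (Monoid.CoprodI.of x) = Ffam i x from Monoid.CoprodI.lift_of Ffam x,
    show Monoid.CoprodI.lift pingF (Monoid.CoprodI.of x) = pingF i x from Monoid.CoprodI.lift_of pingF x]
  cases i
  · show psiQ ((mkQ (sg * tg)) ^ (Multiplicative.toAdd x).val)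
      = (act (S * T)) ^ (Multiplicative.toAdd x).val
    rw [map_pow, psiQ_mkQ]
    show (act (piP (sg * tg))) ^ _ = _
    rw [_root_.map_mul piP, piP_sg, piP_tg]
  · show psiQ ((mkQ sg) ^ (Multiplicative.toAdd x).val)
      = (act S) ^ (Multiplicative.toAdd x).val
    rw [map_pow, psiQ_mkQ]
    show (act (piP sg)) ^ _ = _
    rw [piP_sg]

lemma phiQ_surjective : Function.Surjective phiQ := by
  intro q
  obtain ⟨p, rfl⟩ := QuotientGroup.mk'_surjective Zsub q
  suffices h : p ∈ phiQ.range.comap mkQ by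
    obtain ⟨y, hy⟩ := h
    exact ⟨y, hy⟩
  apply PresentedGroup.generated_by
  intro j
  have hs : mkQ sg ∈ phiQ.range := by
    refine ⟨Monoid.CoprodI.of (i := true) (Multiplicative.ofAdd (1 : ZMod 2)), ?_⟩
    rw [show phiQ (Monoid.CoprodI.of (i := true) (Multiplicative.ofAdd (1 : ZMod 2)))
      = Ffam true (Multiplicative.ofAdd (1 : ZMod 2)) from Monoid.CoprodI.lift_of Ffam _]
    show (mkQ sg) ^ (ZMod.val (1 : ZMod 2)) = mkQ sg
    rw [ZMod.val_one, pow_one]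
  have hst : mkQ (sg * tg) ∈ phiQ.range := by
    refine ⟨Monoid.CoprodI.of (i := false) (Multiplicative.ofAdd (1 : ZMod 3)), ?_⟩
    rw [show phiQ (Monoid.CoprodI.of (i := false) (Multiplicative.ofAdd (1 : ZMod 3)))
      = Ffam false (Multiplicative.ofAdd (1 : ZMod 3)) from Monoid.CoprodI.lift_of Ffam _]
    show (mkQ (sg * tg)) ^ (ZMod.val (1 : ZMod 3)) = mkQ (sg * tg)
    rw [ZMod.val_one, pow_one]
  cases j
  · -- tg
    show mkQ tg ∈ phiQ.range
    have : mkQ tg = (mkQ sg)⁻¹ * mkQ (sg * tg) := by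
      rw [← map_inv, ← _root_.map_mul]
      congr 1
      group
    rw [this]
    exact mul_mem (inv_mem hs) hst
  · exact hs

lemma piP_injective : Function.Injective piP := by
  rw [injective_iff_map_eq_one]
  intro p hp
  have h1 : psiQ (mkQ p) = 1 := by
    rw [psiQ_mkQ]
    show act (piP p) = 1
    rw [hp, _root_.map_one]
  obtain ⟨y, hy⟩ := phiQ_surjective (mkQ p)
  have h2 : Monoid.CoprodI.lift pingF y = 1 := by
    rw [← psiQ_comp_phiQ]
    show psiQ (phiQ y) = 1
    rw [hy, h1]
  have h3 : y = 1 := injective_pingpong (by rw [h2, _root_.map_one])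
  have h4 : mkQ p = 1 := by rw [← hy, h3, _root_.map_one]
  have h5 : p ∈ Zsub := (QuotientGroup.eq_one_iff _).1 h4
  rw [Zsub, Subgroup.mem_zpowers_iff] at h5
  obtain ⟨n, rfl⟩ := h5
  -- zg ^ n = 1 or zg, and piP zg = S ^ 2 ≠ 1
  have hz2 : zg ^ 2 = 1 := by
    rw [zg, ← pow_mul]
    exact sg_pow_four
  have hzg_ne : piP zg ≠ 1 := by
    show piP (sg ^ 2) ≠ 1
    rw [map_pow, piP_sg]
    exact S_sq_ne_one
  have key : ∀ m : ℤ, zg ^ (2 * m) = 1 := by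
    intro m
    have h2' : zg ^ (2:ℤ) = 1 := by
      rw [show (2:ℤ) = ((2:ℕ):ℤ) from rfl, zpow_natCast, hz2]
    rw [_root_.zpow_mul, h2', _root_.one_zpow]
  rcases Int.even_or_odd n with ⟨m, hm⟩ | ⟨m, hm⟩
  · rw [hm, ← two_mul, key]
  · exfalso
    have h6 : zg ^ n = zg := by
      rw [hm, _root_.zpow_add, key, _root_.one_mul, _root_.zpow_one]
    rw [h6] at hp
    exact hzg_ne hp

lemma coe_S_sq' : ((S ^ 2 : SL(2,ℤ)) : Matrix (Fin 2) (Fin 2) ℤ) = !![-1,0;0,-1] := by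
  rw [coe_S_sq]
  exact Matrix.eta_fin_two (-1 : Matrix (Fin 2) (Fin 2) ℤ)

lemma entry_Tzpow_mul (q : ℤ) (g : SL(2,ℤ)) :
    ((T ^ q * g : SL(2,ℤ))) 0 0 = g 0 0 + q * g 1 0 := by
  show ((T ^ q * g : SL(2,ℤ)) : Matrix (Fin 2) (Fin 2) ℤ) 0 0 = _
  rw [Matrix.SpecialLinearGroup.coe_mul, coe_T_zpow, Matrix.mul_apply, Fin.sum_univ_two]
  simp

lemma entry_S_mul (g : SL(2,ℤ)) : ((S * g : SL(2,ℤ))) 1 0 = g 0 0 := by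
  show ((S * g : SL(2,ℤ)) : Matrix (Fin 2) (Fin 2) ℤ) 1 0 = _
  rw [Matrix.SpecialLinearGroup.coe_mul, coe_S, Matrix.mul_apply, Fin.sum_univ_two]
  simp

lemma mem_closure_ST (g : SL(2,ℤ)) : g ∈ Subgroup.closure {S, T} := by
  have hS : (S : SL(2,ℤ)) ∈ Subgroup.closure {S, T} :=
    Subgroup.subset_closure (Set.mem_insert _ _)
  have hT : (T : SL(2,ℤ)) ∈ Subgroup.closure {S, T} :=
    Subgroup.subset_closure (Set.mem_insert_of_mem _ rfl)
  generalize hn : (g 1 0).natAbs = n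
  induction n using Nat.strong_induction_on generalizing g with
  | _ n ih =>
  by_cases hc : g 1 0 = 0
  · -- g is ± upper triangular
    have hdet := det_entries g
    rw [hc, mul_zero, sub_zero] at hdet
    rcases Int.mul_eq_one_iff_eq_one_or_neg_one.1 hdet with ⟨ha, hd⟩ | ⟨ha, hd⟩
    · -- g = T ^ (g 0 1)
      have hg : g = T ^ (g 0 1) := by
        apply Subtype.ext
        rw [coe_T_zpow]
        conv_lhs => rw [Matrix.eta_fin_two (g : Matrix (Fin 2) (Fin 2) ℤ)]
        rw [ha, hd, hc]
      rw [hg]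
      exact Subgroup.zpow_mem _ hT _
    · -- g = S^2 * T ^ (-(g 0 1))
      have hg : g = S ^ 2 * T ^ (-(g 0 1)) := by
        apply Subtype.ext
        rw [Matrix.SpecialLinearGroup.coe_mul, coe_S_sq', coe_T_zpow]
        conv_lhs => rw [Matrix.eta_fin_two (g : Matrix (Fin 2) (Fin 2) ℤ)]
        rw [ha, hd, hc]
        norm_num [Matrix.mul_fin_two]
      rw [hg]
      exact mul_mem (pow_mem hS 2) (Subgroup.zpow_mem _ hT _)
  · -- Euclidean step
    set q : ℤ := g 0 0 / g 1 0 with hq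
    set g' : SL(2,ℤ) := S * (T ^ (-q) * g) with hg'
    have hc' : g' 1 0 = g 0 0 % g 1 0 := by
      rw [hg', entry_S_mul, entry_Tzpow_mul, Int.emod_def, hq]
      ring
    have hlt : (g' 1 0).natAbs < n := by
      rw [hc', ← hn]
      have h1 : 0 ≤ g 0 0 % g 1 0 := Int.emod_nonneg _ hc
      have h2 : g 0 0 % g 1 0 < |g 1 0| := by
        rcases lt_or_gt_of_ne hc with h | h
        · have h' := Int.emod_lt_of_pos (g 0 0) (by linarith : (0:ℤ) < -(g 1 0))
          rw [Int.emod_neg] at h'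
          rw [abs_of_neg h]
          exact h'
        · rw [abs_of_pos h]
          exact Int.emod_lt_of_pos _ h
      rw [Int.abs_eq_natAbs] at h2
      omega
    have hmem' : g' ∈ Subgroup.closure {S, T} := ih _ hlt g' rfl
    have hgeq : g = T ^ q * (S⁻¹ * g') := by
      rw [hg']
      group
    rw [hgeq]
    exact mul_mem (Subgroup.zpow_mem _ hT _) (mul_mem (inv_mem hS) hmem')

lemma piP_surjective : Function.Surjective piP := by
  intro g
  have h : Subgroup.closure {S, T} ≤ piP.range := by
    rw [Subgroup.closure_le]
    rintro x (rfl | rfl)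
    · exact ⟨sg, piP_sg⟩
    · exact ⟨tg, piP_tg⟩
  exact h (mem_closure_ST g)

noncomputable def eqv : P ≃* SL(2,ℤ) :=
  MulEquiv.ofBijective piP ⟨piP_injective, piP_surjective⟩

@[simp] lemma eqv_symm_S : eqv.symm S = sg := by
  rw [MulEquiv.symm_apply_eq]
  exact piP_sg.symm

@[simp] lemma eqv_symm_T : eqv.symm T = tg := by
  rw [MulEquiv.symm_apply_eq]
  exact piP_tg.symm

end SL2Pres

open SL2Pres ModularGroup in
/-- For matrices `A, B ∈ GL_r(k)` with `A⁴ = 1` and `(AB)³ = A²`, there is a unique group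
homomorphism `ρ : SL₂(ℤ) → GL_r(k)` with `ρ(𝔰) = A` and `ρ(𝔱) = B`. -/
theorem exists_unique_hom_of_relations (k : Type) [Field k] (r : ℕ) (hr : 0 < r)
    (A B : GL (Fin r) k) (hA : A ^ 4 = 1) (hAB : (A * B) ^ 3 = A ^ 2) :
    ∃! ρ : SpecialLinearGroup (Fin 2) ℤ →* GL (Fin r) k,
      ρ ModularGroup.S = A ∧ ρ ModularGroup.T = B := by
  classical
  set ρ0 : P →* GL (Fin r) k :=
    PresentedGroup.toGroup (f := fun x => bif x then A else B) (rels_hold hA hAB) with hρ0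
  set ρ : SpecialLinearGroup (Fin 2) ℤ →* GL (Fin r) k :=
    ρ0.comp eqv.symm.toMonoidHom with hρ
  have hρS : ρ ModularGroup.S = A := by
    show ρ0 (eqv.symm S) = A
    rw [eqv_symm_S]
    exact PresentedGroup.toGroup.of _
  have hρT : ρ ModularGroup.T = B := by
    show ρ0 (eqv.symm T) = B
    rw [eqv_symm_T]
    exact PresentedGroup.toGroup.of _
  refine ⟨ρ, ⟨hρS, hρT⟩, ?_⟩
  rintro ρ' ⟨hS', hT'⟩
  apply MonoidHom.ext
  intro g
  have key : ∀ x ∈ Subgroup.closure {ModularGroup.S, ModularGroup.T}, ρ' x = ρ x := by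
    intro x hx
    induction hx using Subgroup.closure_induction with
    | mem y hy =>
      rcases hy with rfl | hy
      · rw [hS', hρS]
      · rw [Set.mem_singleton_iff] at hy
        subst hy
        rw [hT', hρT]
    | one => rw [_root_.map_one, _root_.map_one]
    | mul a b _ _ ha hb => rw [_root_.map_mul, _root_.map_mul, ha, hb]
    | inv a _ ha => rw [_root_.map_inv, _root_.map_inv, ha]
  exact key g (mem_closure_ST g)
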